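/- arXiv:1612.02730 — 2 statements merged into one kernel-verified Lean document; each statement's English description precedes it below -/
import Mathlib

section
/- Let n,d be integers with 2 ≤ n < d, G = gcd(n,d), q ≥ 2 an integer, and 2g - 2 = nd - n - d - G with g ≥ 2. Then the cardinality of S = {(i,j) ∈ ℤ² : i ≥ 0, 0 ≤ j < n, ni + dj ≤ (2g-2)q} equals (2q-1)(g-1). -/
open Finset

private lemma Ico_int_succ (n : ℤ) (hn : 0 ≤ n) :
    Finset.Ico (0:ℤ) (n+1) = insert n (Finset.Ico (0:ℤ) n) := by
  ext x; simp only [mem_Ico, mem_insert]; omega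

private lemma gauss_int (n : ℤ) (hn : 0 ≤ n) :
    2 * ∑ j ∈ Finset.Ico (0:ℤ) n, j = n * (n - 1) := by
  have himg : Finset.Ico (0:ℤ) n
      = Finset.image (fun k : ℕ => (k : ℤ)) (Finset.range n.toNat) := by
    ext x
    simp only [Finset.mem_Ico, Finset.mem_image, Finset.mem_range]
    constructor
    · intro hx
      exact ⟨x.toNat, by omega, by omega⟩
    · rintro ⟨k, hk, rfl⟩
      omega
  rw [himg, Finset.sum_image (by intro x _ y _ h; exact Nat.cast_injective h)]
  have key := Finset.sum_range_id_mul_two n.toNat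
  have hcast : (∑ k ∈ Finset.range n.toNat, (k:ℤ))
      = ((∑ k ∈ Finset.range n.toNat, k : ℕ) : ℤ) := by push_cast; rfl
  rw [hcast]
  rcases Nat.eq_zero_or_pos n.toNat with h | h
  · have hn0 : n = 0 := by omega
    subst hn0; simp
  · have h1 : 1 ≤ n.toNat := h
    zify [h1] at key
    have h2 : (n.toNat : ℤ) = n := by omega
    rw [h2] at key
    linarith

private lemma emod_sum_lemma (n d M : ℤ) (hn : 0 < n) (hGM : (Int.gcd n d : ℤ) ∣ M) :
    2 * ∑ j ∈ Finset.Ico (0:ℤ) n, (M - d * j) % n = n * (n - (Int.gcd n d : ℤ)) := by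
  set G : ℤ := (Int.gcd n d : ℤ) with hGdef
  have hGn : G ∣ n := Int.gcd_dvd_left n d
  have hGd : G ∣ d := Int.gcd_dvd_right n d
  have hGposN : 0 < Int.gcd n d := Int.gcd_pos_of_ne_zero_left d hn.ne'
  have hG : 0 < G := by rw [hGdef]; exact_mod_cast hGposN
  set n₁ : ℤ := n / G with hn₁def
  set d₁ : ℤ := d / G with hd₁def
  have hn₁ : n = G * n₁ := (Int.mul_ediv_cancel' hGn).symm
  have hd₁ : d = G * d₁ := (Int.mul_ediv_cancel' hGd).symm
  have hcop : Int.gcd n₁ d₁ = 1 := Int.gcd_div_gcd_div_gcd hGposN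
  have hn₁pos : 0 < n₁ := by nlinarith
  -- reindex
  have hre : ∑ j ∈ Finset.Ico (0:ℤ) n, (M - d * j) % n
      = ∑ p ∈ (Finset.Ico (0:ℤ) n₁) ×ˢ (Finset.Ico (0:ℤ) G),
          (M - d * (p.1 + n₁ * p.2)) % n := by
    refine Finset.sum_nbij' (fun x => (x % n₁, x / n₁)) (fun p => p.1 + n₁ * p.2)
      ?_ ?_ ?_ ?_ ?_
    · intro x hx
      simp only [mem_Ico] at hx
      simp only [Finset.mem_product, mem_Ico]
      refine ⟨⟨Int.emod_nonneg x hn₁pos.ne', Int.emod_lt_of_pos x hn₁pos⟩,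
        Int.ediv_nonneg hx.1 hn₁pos.le, ?_⟩
      rw [Int.ediv_lt_iff_lt_mul hn₁pos]
      nlinarith [hx.2]
    · intro p hp
      simp only [Finset.mem_product, mem_Ico] at hp
      simp only [mem_Ico]
      constructor
      · nlinarith [hp.1.1, hp.2.1]
      · nlinarith [hp.1.2, hp.2.2, hp.1.1]
    · intro x hx
      show x % n₁ + n₁ * (x / n₁) = x
      have := Int.mul_ediv_add_emod x n₁
      linarith
    · intro p hp
      simp only [Finset.mem_product, mem_Ico] at hp
      show ((p.1 + n₁ * p.2) % n₁, (p.1 + n₁ * p.2) / n₁) = p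
      have h1 : (p.1 + n₁ * p.2) % n₁ = p.1 := by
        rw [Int.add_mul_emod_self_left, Int.emod_eq_of_lt hp.1.1 hp.1.2]
      have h2 : (p.1 + n₁ * p.2) / n₁ = p.2 := by
        rw [Int.add_mul_ediv_left _ _ hn₁pos.ne', Int.ediv_eq_zero_of_lt hp.1.1 hp.1.2,
          zero_add]
      rw [h1, h2]
    · intro x hx
      show (M - d * x) % n = (M - d * (x % n₁ + n₁ * (x / n₁))) % n
      have hxx : x % n₁ + n₁ * (x / n₁) = x := by
        have := Int.mul_ediv_add_emod x n₁
        linarith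
      rw [hxx]
  rw [hre, Finset.sum_product]
  have hkey : ∀ a b : ℤ, (M - d * (a + n₁ * b)) % n = (M - d * a) % n := by
    intro a b
    have : M - d * (a + n₁ * b) = (M - d * a) + n * (-(d₁ * b)) := by
      rw [hd₁] at *; rw [hn₁]; ring
    rw [this, Int.add_mul_emod_self_left]
  have hinner : ∀ a : ℤ, ∑ b ∈ Finset.Ico (0:ℤ) G, (M - d * (a + n₁ * b)) % n
      = G * ((M - d * a) % n) := by
    intro a
    have : ∀ b ∈ Finset.Ico (0:ℤ) G, (M - d * (a + n₁ * b)) % n = (M - d * a) % n :=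
      fun b _ => hkey a b
    rw [Finset.sum_congr rfl this, Finset.sum_const, Int.card_Ico, nsmul_eq_mul,
      sub_zero, Int.toNat_of_nonneg hG.le]
  rw [Finset.sum_congr rfl (fun a _ => hinner a), ← Finset.mul_sum]
  -- image argument
  set s : Finset ℤ := Finset.Ico (0:ℤ) n₁ with hsdef
  set f : ℤ → ℤ := fun a => (M - d * a) % n with hfdef
  have hinj : ∀ x ∈ s, ∀ y ∈ s, f x = f y → x = y := by
    intro x hx y hy hfxy
    simp only [hsdef, mem_Ico] at hx hy
    have hd0 : ((M - d * x) - (M - d * y)) % n = 0 := by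
      rw [Int.sub_emod, hfdef] at *
      simp only at hfxy
      rw [hfxy, sub_self, Int.zero_emod]
    have hdvd : n ∣ d * (y - x) := by
      have : (M - d * x) - (M - d * y) = d * (y - x) := by ring
      rw [this] at hd0
      exact Int.dvd_of_emod_eq_zero hd0
    have hdvd2 : n₁ ∣ d₁ * (y - x) := by
      rw [hn₁, hd₁] at hdvd
      have : G * n₁ ∣ G * (d₁ * (y - x)) := by
        have h' : G * d₁ * (y - x) = G * (d₁ * (y - x)) := by ring
        rwa [h'] at hdvd
      exact (mul_dvd_mul_iff_left hG.ne').mp this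
    have hcop' : IsCoprime n₁ d₁ := Int.isCoprime_iff_gcd_eq_one.mpr hcop
    have hdvd3 : n₁ ∣ (y - x) := by
      have : n₁ ∣ (y - x) * d₁ := by rwa [mul_comm] at hdvd2
      exact hcop'.dvd_of_dvd_mul_right this
    have : y - x = 0 := Int.eq_zero_of_abs_lt_dvd hdvd3 (by rw [abs_lt]; omega)
    omega
  have hmaps : ∀ a ∈ s, f a ∈ s.image (fun k => G * k) := by
    intro a _
    have h0 : 0 ≤ f a := Int.emod_nonneg _ hn.ne'
    have h1 : f a < n := Int.emod_lt_of_pos _ hn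
    have hGdvd : G ∣ f a := by
      rw [hfdef]
      simp only
      rw [Int.emod_def]
      exact ((hGM.sub (hGd.mul_right a)).sub (hGn.mul_right _))
    obtain ⟨k, hk⟩ := hGdvd
    rw [Finset.mem_image]
    refine ⟨k, ?_, hk.symm⟩
    simp only [hsdef, mem_Ico]
    constructor
    · nlinarith
    · nlinarith [hn₁]
  have hcardeq : s.image f = s.image (fun k => G * k) := by
    apply Finset.eq_of_subset_of_card_le
    · intro x hx
      rw [Finset.mem_image] at hx
      obtain ⟨a, ha, rfl⟩ := hx
      exact hmaps a ha
    · rw [Finset.card_image_of_injOn (fun x hx y hy h => hinj x hx y hy h),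
        Finset.card_image_of_injective _ (mul_right_injective₀ hG.ne')]
  have hsum : ∑ a ∈ s, f a = G * ∑ k ∈ s, k := by
    have h1 : ∑ x ∈ s.image f, x = ∑ a ∈ s, f a := Finset.sum_image hinj
    have h2 : ∑ x ∈ s.image (fun k => G * k), x = ∑ k ∈ s, G * k :=
      Finset.sum_image (fun x _ y _ h => mul_left_cancel₀ hG.ne' h)
    rw [← h1, hcardeq, h2, Finset.mul_sum]
  rw [hsum]
  have hgauss : 2 * ∑ k ∈ s, k = n₁ * (n₁ - 1) := gauss_int n₁ hn₁pos.le
  have : 2 * (G * (G * ∑ k ∈ s, k)) = G * G * (2 * ∑ k ∈ s, k) := by ring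
  rw [this, hgauss, hn₁]
  ring

/-- For `2 ≤ n < d`, `G = gcd(n,d)`, `q ≥ 2`, `2(g-1) = nd-n-d-G`, `g ≥ 2`,
the number of integer pairs `(i,j)` with `i ≥ 0`, `0 ≤ j < n`,
`ni + dj ≤ (2g-2)q` equals `(2q-1)(g-1)`. -/
theorem card_basis_general (n d q g : ℤ) (hn : 2 ≤ n) (hnd : n < d) (hq : 2 ≤ q)
    (hg : 2 * (g - 1) = n * d - n - d - (Int.gcd n d : ℤ)) (hg2 : 2 ≤ g) :
    (({p : ℤ × ℤ | 0 ≤ p.1 ∧ 0 ≤ p.2 ∧ p.2 < n ∧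
        n * p.1 + d * p.2 ≤ (2 * g - 2) * q}.ncard : ℤ)) = (2 * q - 1) * (g - 1) := by
  set G : ℤ := (Int.gcd n d : ℤ) with hGdef
  set M : ℤ := (2 * g - 2) * q with hM
  have hn0 : (0:ℤ) < n := by omega
  have hd0 : (0:ℤ) < d := by omega
  have hGn : G ∣ n := Int.gcd_dvd_left n d
  have hGd : G ∣ d := Int.gcd_dvd_right n d
  have hGposN : 0 < Int.gcd n d := Int.gcd_pos_of_ne_zero_left d hn0.ne'
  have hG : 0 < G := by rw [hGdef]; exact_mod_cast hGposN
  have hGleN : G ≤ n := Int.le_of_dvd hn0 hGn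
  have hGM : G ∣ M := by
    have h1 : G ∣ 2 * (g - 1) := by
      rw [hg]
      exact ((((hGn.mul_right d).sub hGn).sub hGd).sub dvd_rfl)
    have : M = (2 * (g - 1)) * q := by rw [hM]; ring
    rw [this]
    exact h1.mul_right q
  have hstar : 2 ≤ n * d - n - d - G := by omega
  -- key bound : n*d - n - d - 2*G ≥ 0
  have hbound : 0 ≤ n * d - n - d - 2 * G := by
    rcases le_or_gt G 2 with h | h
    · linarith
    · have hGdn : G ≤ d - n := Int.le_of_dvd (by omega) (hGd.sub hGn)
      nlinarith [mul_nonneg (sub_nonneg.mpr hGleN) (by linarith : (0:ℤ) ≤ d - 1),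
        mul_nonneg (by linarith : (0:ℤ) ≤ G - 1) (by linarith : (0:ℤ) ≤ d - 2 * G)]
  have hMge : d * n - d - n ≤ M := by
    have h1 : (2 * (g - 1)) * 2 ≤ (2 * (g - 1)) * q :=
      mul_le_mul_of_nonneg_left hq (by omega)
    have h2 : M = (2 * (g - 1)) * q := by rw [hM]; ring
    nlinarith [hstar]
  have hMj : ∀ j : ℤ, 0 ≤ j → j < n → -n ≤ M - d * j := by
    intro j h0 h1
    have : d * j ≤ d * (n - 1) := mul_le_mul_of_nonneg_left (by omega) hd0.le
    linarith
  -- the finset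
  set F : Finset (ℤ × ℤ) :=
    ((Finset.Icc (0:ℤ) M) ×ˢ (Finset.Ico (0:ℤ) n)).filter
      (fun p => n * p.1 + d * p.2 ≤ M) with hF
  have hset : {p : ℤ × ℤ | 0 ≤ p.1 ∧ 0 ≤ p.2 ∧ p.2 < n ∧
      n * p.1 + d * p.2 ≤ M} = (↑F : Set (ℤ × ℤ)) := by
    ext ⟨i, j⟩
    simp only [hF, Set.mem_setOf_eq, Finset.coe_filter, Finset.mem_coe,
      Finset.mem_product, mem_Icc, mem_Ico, Set.mem_setOf_eq]
    constructor
    · rintro ⟨h1, h2, h3, h4⟩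
      have hdj : 0 ≤ d * j := mul_nonneg hd0.le h2
      have hni : i ≤ n * i := le_mul_of_one_le_left h1 (by omega)
      exact ⟨⟨⟨h1, by linarith⟩, h2, h3⟩, h4⟩
    · rintro ⟨⟨⟨h1, _⟩, h2, h3⟩, h4⟩
      exact ⟨h1, h2, h3, h4⟩
  rw [hset, Set.ncard_coe_finset]
  -- fiberwise count
  have hfiber : F.card = ∑ j ∈ Finset.Ico (0:ℤ) n,
      (F.filter (fun p => p.2 = j)).card := by
    apply Finset.card_eq_sum_card_fiberwise
    intro p hp
    simp only [hF, Finset.mem_coe, Finset.mem_filter, Finset.mem_product, mem_Icc, mem_Ico] at hp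
    simp only [Finset.coe_Ico, Set.mem_Ico, Finset.mem_coe, mem_Ico]
    exact hp.1.2
  have hfib2 : ∀ j ∈ Finset.Ico (0:ℤ) n,
      (F.filter (fun p => p.2 = j)).card
        = (Finset.Icc (0:ℤ) ((M - d * j) / n)).card := by
    intro j hj
    simp only [mem_Ico] at hj
    have himg : F.filter (fun p => p.2 = j)
        = (Finset.Icc (0:ℤ) ((M - d * j) / n)).image (fun i => (i, j)) := by
      ext ⟨a, b⟩
      simp only [hF, Finset.mem_filter, Finset.mem_product, mem_Icc, mem_Ico,
        Finset.mem_image, Prod.mk.injEq]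
      constructor
      · rintro ⟨⟨⟨⟨h1, _⟩, _, _⟩, h4⟩, h5⟩
        subst h5
        refine ⟨a, ⟨h1, ?_⟩, rfl, rfl⟩
        rw [Int.le_ediv_iff_mul_le hn0]
        linarith [h4]
      · rintro ⟨i, ⟨h1, h2⟩, rfl, rfl⟩
        rw [Int.le_ediv_iff_mul_le hn0] at h2
        have hdj : 0 ≤ d * j := mul_nonneg hd0.le hj.1
        have hai : i ≤ i * n := le_mul_of_one_le_right h1 (by omega)
        exact ⟨⟨⟨⟨h1, by linarith⟩, hj.1, hj.2⟩, by linarith⟩, rfl⟩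
    rw [himg, Finset.card_image_of_injective]
    intro x y hxy
    simpa using congrArg Prod.fst hxy
  rw [hfiber, Finset.sum_congr rfl hfib2]
  -- cast to ℤ
  have hcast : ((∑ j ∈ Finset.Ico (0:ℤ) n,
      (Finset.Icc (0:ℤ) ((M - d * j) / n)).card : ℕ) : ℤ)
      = ∑ j ∈ Finset.Ico (0:ℤ) n, ((M - d * j) / n + 1) := by
    push_cast
    apply Finset.sum_congr rfl
    intro j hj
    simp only [mem_Ico] at hj
    rw [Int.card_Icc]
    have hge : -1 ≤ (M - d * j) / n := by
      rw [Int.le_ediv_iff_mul_le hn0]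
      have := hMj j hj.1 hj.2
      linarith
    omega
  rw [hcast]
  -- final computation
  set T : ℤ := ∑ j ∈ Finset.Ico (0:ℤ) n, ((M - d * j) / n + 1) with hT
  set Sj : ℤ := ∑ j ∈ Finset.Ico (0:ℤ) n, j with hSj
  set R : ℤ := ∑ j ∈ Finset.Ico (0:ℤ) n, (M - d * j) % n with hR
  have hcard : ((Finset.Ico (0:ℤ) n).card : ℤ) = n := by
    rw [Int.card_Ico]; omega
  have eqA : n * T = (n * M - d * Sj - R) + n * n := by
    rw [hT, Finset.mul_sum]
    have : ∀ j ∈ Finset.Ico (0:ℤ) n,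
        n * ((M - d * j) / n + 1) = ((M - d * j) - (M - d * j) % n) + n := by
      intro j _
      have := Int.mul_ediv_add_emod (M - d * j) n
      linarith
    rw [Finset.sum_congr rfl this]
    rw [Finset.sum_add_distrib, Finset.sum_sub_distrib, Finset.sum_const,
      Finset.sum_sub_distrib, Finset.sum_const, ← Finset.mul_sum]
    simp only [nsmul_eq_mul, hcard]
    rfl
  have h2R : 2 * R = n * (n - G) := by
    rw [hR, hGdef]
    exact emod_sum_lemma n d M hn0 (by rwa [← hGdef])
  have hSjv : 2 * Sj = n * (n - 1) := gauss_int n hn0.le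
  have h2n : (2 * n : ℤ) ≠ 0 := by omega
  apply mul_left_cancel₀ h2n
  linear_combination 2 * eqA - d * hSjv - h2R + n * hg
end

section
/- Let n,d,q be positive integers with 2 ≤ n < d, q ≥ 2, G = gcd(n,d), and 2g-2 = nd-n-d-G with g ≥ 2, and assume (n,d,q) ∉ {(2,5,2),(2,6,2)}. Then (d-1)·∑_{(i,j)∈S} j = (d-1)[(n-1)((g-1)q + (-2nd+3n+d)/6) - ∑_{j=0}^{n-1} frac((-(d+G)q - dj)/n)·j], where S = {(i,j) ∈ ℤ² : i ≥ 0, 0 ≤ j < n, ni+dj ≤ (2g-2)q} and frac denotes fractional part. -/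
private lemma sumId (n : ℤ) (hn : 0 ≤ n) :
    ∑ j ∈ Finset.Ico (0 : ℤ) n, (j : ℚ) = n * (n - 1) / 2 := by
  obtain ⟨m, rfl⟩ := Int.eq_ofNat_of_zero_le hn
  induction m with
  | zero => simp
  | succ m ih =>
    rw [show ((m + 1 : ℕ) : ℤ) = (m : ℤ) + 1 by push_cast; ring,
      show Finset.Ico (0:ℤ) ((m:ℤ)+1) = insert (m:ℤ) (Finset.Ico (0:ℤ) (m:ℤ)) by
        ext x; simp only [Finset.mem_Ico, Finset.mem_insert]; omega,
      Finset.sum_insert (by simp), ih (by positivity)]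
    push_cast; ring

private lemma sumSq (n : ℤ) (hn : 0 ≤ n) :
    ∑ j ∈ Finset.Ico (0 : ℤ) n, (j : ℚ) ^ 2 = n * (n - 1) * (2 * n - 1) / 6 := by
  obtain ⟨m, rfl⟩ := Int.eq_ofNat_of_zero_le hn
  induction m with
  | zero => simp
  | succ m ih =>
    rw [show ((m + 1 : ℕ) : ℤ) = (m : ℤ) + 1 by push_cast; ring,
      show Finset.Ico (0:ℤ) ((m:ℤ)+1) = insert (m:ℤ) (Finset.Ico (0:ℤ) (m:ℤ)) by
        ext x; simp only [Finset.mem_Ico, Finset.mem_insert]; omega,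
      Finset.sum_insert (by simp), ih (by positivity)]
    push_cast; ring

private lemma floor_div_rat (a b : ℤ) (hb : 0 < b) :
    ((a / b : ℤ) : ℚ) = (a : ℚ) / (b : ℚ) - Int.fract ((a : ℚ) / (b : ℚ)) := by
  have h : ⌊(a : ℚ) / (b : ℚ)⌋ = a / b := by
    have := Rat.floor_intCast_div_natCast a b.toNat
    rwa [show ((b.toNat : ℕ) : ℚ) = (b : ℚ) by
        rw [← Int.cast_natCast, Int.toNat_of_nonneg hb.le],
      show ((b.toNat : ℕ) : ℤ) = b by rw [Int.toNat_of_nonneg hb.le]] at this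
  rw [Int.fract, h]; ring

private lemma key_ineq (n d q g : ℤ) (hn : 2 ≤ n) (hnd : n < d) (hq : 2 ≤ q)
    (hg : 2 * (g - 1) = n * d - n - d - (Int.gcd n d : ℤ)) (hg2 : 2 ≤ g)
    (h1 : ¬(n = 2 ∧ d = 5 ∧ q = 2)) (h2 : ¬(n = 2 ∧ d = 6 ∧ q = 2)) :
    d * (n - 1) ≤ (2 * g - 2) * q := by
  obtain ⟨G, hGdef⟩ : ∃ G : ℤ, (Int.gcd n d : ℤ) = G := ⟨_, rfl⟩
  rw [hGdef] at hg
  have hG1 : 1 ≤ G := by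
    have h0 : 0 < Int.gcd n d := Int.gcd_pos_of_ne_zero_left d (by omega)
    omega
  have hGn : G ∣ n := hGdef ▸ Int.gcd_dvd_left n d
  have hGd : G ∣ d := hGdef ▸ Int.gcd_dvd_right n d
  have hN : 2 * g - 2 = n * d - n - d - G := by linarith
  have hN2 : (2 : ℤ) ≤ 2 * g - 2 := by linarith
  have h2N : (2 * g - 2) * 2 ≤ (2 * g - 2) * q := by nlinarith
  by_cases hn3 : 3 ≤ n
  · have hGle : G ≤ n := Int.le_of_dvd (by omega) hGn
    by_cases hdvd : n ∣ d
    · obtain ⟨k, hk⟩ := hdvd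
      have hk2 : 2 ≤ k := by nlinarith
      have hGn' : G = n := by
        have h := Int.gcd_eq_natAbs_left ⟨k, hk⟩
        rw [← hGdef, h]
        exact Int.natAbs_of_nonneg (by omega)
      have : d * (n - 1) ≤ (2 * g - 2) * 2 := by nlinarith
      linarith
    · have h2G : 2 * G ≤ n := by
        obtain ⟨m, hm⟩ := hGn
        have hm1 : 1 ≤ m := by nlinarith
        have hmne : m ≠ 1 := by
          rintro rfl
          rw [mul_one] at hm
          exact hdvd (hm ▸ hGd)
        have hm2 : 2 ≤ m := by omega
        have h2m : G * 2 ≤ G * m := by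
          nlinarith [mul_nonneg (show (0:ℤ) ≤ G by omega) (show (0:ℤ) ≤ m - 2 by omega)]
        linarith [h2m]
      by_cases hd5 : 5 ≤ d
      · have : d * (n - 1) ≤ (2 * g - 2) * 2 := by nlinarith
        linarith
      · have hd4 : d = 4 := by omega
        have hn3' : n = 3 := by omega
        subst hd4; subst hn3'
        omega
  · have hn2 : n = 2 := by omega
    subst hn2
    have hG2 : G ≤ 2 := Int.le_of_dvd (by omega) hGn
    by_cases hq3 : 3 ≤ q
    · have h3N : (2 * g - 2) * 3 ≤ (2 * g - 2) * q := by nlinarith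
      omega
    · have hq2 : q = 2 := by omega
      subst hq2
      have hd5 : d ≠ 5 := fun h => h1 ⟨rfl, h, rfl⟩
      have hd6 : d ≠ 6 := fun h => h2 ⟨rfl, h, rfl⟩
      rcases (by omega : G = 1 ∨ G = 2) with hGv | hGv
      · omega
      · have hdvd2 : (2 : ℤ) ∣ d := hGv ▸ hGd
        omega

/-- (Proposition 4.4.) For `2 ≤ n < d`, `G = gcd(n,d)`, `q ≥ 2`,
`2(g-1) = nd-n-d-G`, `g ≥ 2`, with `(n,d,q)` neither `(2,5,2)` nor `(2,6,2)`:
`(d-1)·∑_{(i,j)∈S} j = (d-1)[(n-1)((g-1)q + (-2nd+3n+d)/6)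
  - ∑_{j=0}^{n-1} frac((-(d+G)q - dj)/n)·j]`. -/
theorem W2_formula (n d q g : ℤ) (hn : 2 ≤ n) (hnd : n < d) (hq : 2 ≤ q)
    (hg : 2 * (g - 1) = n * d - n - d - (Int.gcd n d : ℤ)) (hg2 : 2 ≤ g)
    (h1 : ¬(n = 2 ∧ d = 5 ∧ q = 2)) (h2 : ¬(n = 2 ∧ d = 6 ∧ q = 2)) :
    ((d : ℚ) - 1) *
      ((∑ p ∈ ((Finset.Icc (0 : ℤ) ((2 * g - 2) * q)) ×ˢ (Finset.Ico (0 : ℤ) n)).filter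
        (fun p => n * p.1 + d * p.2 ≤ (2 * g - 2) * q), p.2 : ℤ) : ℚ)
      = ((d : ℚ) - 1) *
          (((n : ℚ) - 1) * (((g : ℚ) - 1) * (q : ℚ)
              + (-2 * (n : ℚ) * (d : ℚ) + 3 * (n : ℚ) + (d : ℚ)) / 6)
            - ∑ j ∈ Finset.Ico (0 : ℤ) n,
                Int.fract ((((-(d + (Int.gcd n d : ℤ)) * q - d * j : ℤ)) : ℚ) / (n : ℚ))
                  * (j : ℚ)) := by
  set G : ℤ := (Int.gcd n d : ℤ) with hGdef
  have hkey : d * (n - 1) ≤ (2 * g - 2) * q := key_ineq n d q g hn hnd hq hg hg2 h1 h2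
  have hn0 : (0 : ℤ) < n := by omega
  have hd0 : (0 : ℤ) < d := by omega
  have hnne : (n : ℚ) ≠ 0 := by positivity
  -- Step 1: integer identity
  have step1 : (∑ p ∈ ((Finset.Icc (0 : ℤ) ((2 * g - 2) * q)) ×ˢ (Finset.Ico (0 : ℤ) n)).filter
        (fun p => n * p.1 + d * p.2 ≤ (2 * g - 2) * q), p.2)
      = ∑ j ∈ Finset.Ico (0 : ℤ) n, (((2 * g - 2) * q - d * j) / n + 1) * j := by
    rw [Finset.sum_filter, Finset.sum_product, Finset.sum_comm]
    refine Finset.sum_congr rfl fun j hj => ?_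
    obtain ⟨hj0, hjn⟩ := Finset.mem_Ico.mp hj
    have hdj : d * j ≤ (2 * g - 2) * q := by nlinarith
    have hfil : (Finset.Icc (0 : ℤ) ((2 * g - 2) * q)).filter
        (fun i => n * i + d * j ≤ (2 * g - 2) * q)
        = Finset.Icc (0 : ℤ) (((2 * g - 2) * q - d * j) / n) := by
      ext i
      simp only [Finset.mem_filter, Finset.mem_Icc]
      constructor
      · rintro ⟨⟨hi0, _⟩, hle⟩
        refine ⟨hi0, ?_⟩
        rw [Int.le_ediv_iff_mul_le hn0]
        nlinarith
      · rintro ⟨hi0, hK⟩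
        have h := (Int.le_ediv_iff_mul_le hn0).mp hK
        refine ⟨⟨hi0, ?_⟩, by nlinarith⟩
        nlinarith [mul_nonneg hi0 (by omega : (0 : ℤ) ≤ n - 1)]
    have hK0 : 0 ≤ ((2 * g - 2) * q - d * j) / n :=
      Int.ediv_nonneg (by linarith) (by omega)
    rw [← Finset.sum_filter, hfil, Finset.sum_const, Int.card_Icc, nsmul_eq_mul,
      Int.toNat_of_nonneg (by linarith)]
    ring
  rw [step1, Int.cast_sum]
  have hterm : ∀ j ∈ Finset.Ico (0 : ℤ) n,
      (((((2 * g - 2) * q - d * j) / n + 1) * j : ℤ) : ℚ)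
        = (((2 * (g : ℚ) - 2) * q / n + 1) * (j : ℚ) - ((d : ℚ) / n) * (j : ℚ) ^ 2)
          - Int.fract ((((-(d + G) * q - d * j : ℤ)) : ℚ) / (n : ℚ)) * (j : ℚ) := by
    intro j hj
    have hfr : Int.fract ((((2 * g - 2) * q - d * j : ℤ) : ℚ) / (n : ℚ))
        = Int.fract ((((-(d + G) * q - d * j : ℤ)) : ℚ) / (n : ℚ)) := by
      refine Int.fract_eq_fract.mpr ⟨(d - 1) * q, ?_⟩
      have hgQ : (2 : ℚ) * ((g : ℚ) - 1)
          = (n : ℚ) * d - n - d - (G : ℚ) := by exact_mod_cast hg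
      field_simp
      push_cast
      linear_combination (q : ℚ) * hgQ
    push_cast
    rw [floor_div_rat _ _ hn0, hfr]
    push_cast
    ring
  rw [Finset.sum_congr rfl hterm, Finset.sum_sub_distrib, Finset.sum_sub_distrib,
    ← Finset.mul_sum, ← Finset.mul_sum, sumId n (by omega), sumSq n (by omega)]
  field_simp
  ring
end
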